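/- Let φ ∈ R^n be a probability vector with positive entries, not constant, and let Φ⁺ = (1/k, ..., 1/k) ∈ R^k be the uniform distribution (k ≥ 2). If ψ ∈ R^n is strictly majorized by φ, then there exists δ > 0 such that for every probability vector χ ∈ R^k with ||χ^↓ - Φ⁺|| < δ, the majorization ψ ⊗ χ ≺ φ ⊗ Φ⁺ holds. -/

import Mathlib

open Finset

/-- `eSum v m` is the sum of the `m` largest entries of `v`
(the supremum of sums over subsets of cardinality `m`). -/
noncomputable def eSum {ι : Type} [Fintype ι] (v : ι → ℝ) (m : ℕ) : ℝ :=
  sSup {x | ∃ s : Finset ι, s.card = m ∧ x = ∑ i ∈ s, v i}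

/-- Majorization `x ≺ y`: partial sums of largest entries of `x` are dominated
by those of `y`, with equal total sums. -/
def Maj {ι κ : Type} [Fintype ι] [Fintype κ] (x : ι → ℝ) (y : κ → ℝ) : Prop :=
  (∀ m : ℕ, 1 ≤ m → m < Fintype.card ι → eSum x m ≤ eSum y m) ∧
    ∑ i, x i = ∑ j, y j

/-- Strict majorization `x ◁ y`: all inequalities strict, total sums equal. -/
def SMaj {ι κ : Type} [Fintype ι] [Fintype κ] (x : ι → ℝ) (y : κ → ℝ) : Prop :=
  (∀ m : ℕ, 1 ≤ m → m < Fintype.card ι → eSum x m < eSum y m) ∧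
    ∑ i, x i = ∑ j, y j

/-- Global uniformity: smallest entry divided by largest entry. -/
noncomputable def gu {ι : Type} [Fintype ι] (v : ι → ℝ) : ℝ :=
  sInf (Set.range v) / sSup (Set.range v)

/-- The set of ratios `v b / v a` over consecutive distinct values `v b < v a`
(no value strictly in between). -/
def ratioSet {ι : Type} [Fintype ι] (v : ι → ℝ) : Set ℝ :=
  {r | ∃ a b : ι, v b < v a ∧ (¬ ∃ c : ι, v b < v c ∧ v c < v a) ∧ r = v b / v a}

open Classical in
noncomputable def lu {ι : Type} [Fintype ι] (v : ι → ℝ) : ℝ :=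
  if (∃ a b : ι, v a ≠ v b) then sInf (ratioSet v) else 1

open Classical in
/-- Maximal local uniformity: maximum ratio of consecutive distinct values;
`1` for a constant vector. -/
noncomputable def Lu {ι : Type} [Fintype ι] (v : ι → ℝ) : ℝ :=
  if (∃ a b : ι, v a ≠ v b) then sSup (ratioSet v) else 1

/-- Tensor (Kronecker) product of two vectors. -/
def tens {ι κ : Type} (x : ι → ℝ) (y : κ → ℝ) : ι × κ → ℝ :=
  fun p => x p.1 * y p.2

/-- `k`-fold tensor power of a vector. -/
def tpow {n : ℕ} (v : Fin n → ℝ) (k : ℕ) : (Fin k → Fin n) → ℝ :=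
  fun f => ∏ i, v (f i)

/-- A probability vector: nonnegative entries summing to one. -/
def IsProb {ι : Type} [Fintype ι] (v : ι → ℝ) : Prop :=
  (∀ i, 0 ≤ v i) ∧ ∑ i, v i = 1

/-- `v` sorted in non-increasing order. -/
noncomputable def sortDesc {n : ℕ} (v : Fin n → ℝ) : Fin n → ℝ :=
  fun i => v (Tuple.sort v i.rev)

/-- Shannon entropy (base 2), with the convention `0 log 0 = 0`. -/
noncomputable def entH {ι : Type} [Fintype ι] (v : ι → ℝ) : ℝ :=
  -∑ i, v i * Real.logb 2 (v i)



lemma eSum_subset_range {ι : Type} [Fintype ι] (v : ι → ℝ) (m : ℕ) :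
    {x | ∃ s : Finset ι, s.card = m ∧ x = ∑ i ∈ s, v i} ⊆
      Set.range (fun s : Finset ι => ∑ i ∈ s, v i) := by
  rintro x ⟨s, _, rfl⟩; exact ⟨s, rfl⟩

lemma eSum_finite {ι : Type} [Fintype ι] (v : ι → ℝ) (m : ℕ) :
    {x | ∃ s : Finset ι, s.card = m ∧ x = ∑ i ∈ s, v i}.Finite :=
  (Set.finite_range _).subset (eSum_subset_range v m)

lemma le_eSum {ι : Type} [Fintype ι] (v : ι → ℝ) (s : Finset ι) :
    ∑ i ∈ s, v i ≤ eSum v s.card :=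
  le_csSup (eSum_finite v s.card).bddAbove ⟨s, rfl, rfl⟩

lemma eSum_le {ι : Type} [Fintype ι] (v : ι → ℝ) {m : ℕ} (hm : m ≤ Fintype.card ι) {c : ℝ}
    (h : ∀ s : Finset ι, s.card = m → ∑ i ∈ s, v i ≤ c) : eSum v m ≤ c := by
  obtain ⟨s, _, hcard⟩ := Finset.exists_subset_card_eq (s := (univ : Finset ι)) (n := m) (by simpa using hm)
  exact csSup_le ⟨_, s, hcard, rfl⟩ (by rintro x ⟨t, ht, rfl⟩; exact h t ht)

lemma eSum_exists {ι : Type} [Fintype ι] (v : ι → ℝ) {m : ℕ} (hm : m ≤ Fintype.card ι) :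
    ∃ s : Finset ι, s.card = m ∧ eSum v m = ∑ i ∈ s, v i := by
  obtain ⟨s, _, hcard⟩ := Finset.exists_subset_card_eq (s := (univ : Finset ι)) (n := m) (by simpa using hm)
  have hmem : eSum v m ∈ {x | ∃ s : Finset ι, s.card = m ∧ x = ∑ i ∈ s, v i} :=
    Set.Nonempty.csSup_mem ⟨_, ⟨s, hcard, rfl⟩⟩ (eSum_finite v m)
  exact hmem

lemma eSum_zero {ι : Type} [Fintype ι] (v : ι → ℝ) : eSum v 0 = 0 := by
  have : {x | ∃ s : Finset ι, s.card = 0 ∧ x = ∑ i ∈ s, v i} = {0} := by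
    ext x; simp [Finset.card_eq_zero]
  rw [eSum, this, csSup_singleton]

lemma eSum_card {ι : Type} [Fintype ι] (v : ι → ℝ) :
    eSum v (Fintype.card ι) = ∑ i, v i := by
  have : {x | ∃ s : Finset ι, s.card = Fintype.card ι ∧ x = ∑ i ∈ s, v i} = {∑ i, v i} := by
    ext x
    simp only [Set.mem_setOf_eq, Set.mem_singleton_iff]
    constructor
    · rintro ⟨s, hs, rfl⟩
      rw [Finset.card_eq_iff_eq_univ] at hs; rw [hs]
    · rintro rfl; exact ⟨univ, Finset.card_univ, rfl⟩
  rw [eSum, this, csSup_singleton]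


lemma eSum_concave {ι : Type} [Fintype ι] (v : ι → ℝ) {a b : ℕ} (hab : a < b)
    (hb : b ≤ Fintype.card ι) :
    eSum v a + eSum v b ≤ eSum v (a + 1) + eSum v (b - 1) := by
  classical
  obtain ⟨s, hs, hes⟩ := eSum_exists v (le_trans (le_of_lt hab) hb)
  obtain ⟨t, ht, het⟩ := eSum_exists v hb
  have hne : (t \ s).Nonempty := by
    rw [← Finset.card_pos]
    have := Finset.card_le_card_sdiff_add_card (s := t) (t := s)
    omega
  obtain ⟨x, hx⟩ := hne
  have hxt : x ∈ t := (Finset.mem_sdiff.mp hx).1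
  have hxs : x ∉ s := (Finset.mem_sdiff.mp hx).2
  have hA : ∑ i ∈ insert x s, v i = v x + ∑ i ∈ s, v i := Finset.sum_insert hxs
  have hB : ∑ i ∈ t.erase x, v i = ∑ i ∈ t, v i - v x := by
    have := Finset.sum_erase_add t v hxt
    linarith
  have h1 : ∑ i ∈ insert x s, v i ≤ eSum v (a + 1) := by
    have := le_eSum v (insert x s)
    rwa [Finset.card_insert_of_notMem hxs, hs] at this
  have h2 : ∑ i ∈ t.erase x, v i ≤ eSum v (b - 1) := by
    have := le_eSum v (t.erase x)
    rwa [Finset.card_erase_of_mem hxt, ht] at this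
  rw [hes, het]
  linarith

lemma eSum_linear_up {ι : Type} [Fintype ι] (v : ι → ℝ) {q : ℕ}
    (i : ℕ) (h : q + i ≤ Fintype.card ι) :
    eSum v (q + i) ≤ eSum v q + (i : ℝ) * (eSum v (q + 1) - eSum v q) := by
  induction i with
  | zero => simp
  | succ i ih =>
    have hstep : eSum v (q + (i + 1)) ≤ eSum v (q + i) + (eSum v (q + 1) - eSum v q) := by
      have := eSum_concave v (a := q) (b := q + i + 1) (by omega) (by omega)
      have e1 : q + i + 1 - 1 = q + i := by omega
      have e2 : q + (i + 1) = q + i + 1 := by omega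
      rw [e1] at this
      rw [e2]
      linarith
    have := ih (by omega)
    push_cast
    linarith

lemma eSum_linear_down {ι : Type} [Fintype ι] (v : ι → ℝ) {q : ℕ}
    (hq : q + 1 ≤ Fintype.card ι)
    (i : ℕ) (h : i ≤ q) :
    eSum v (q - i) + (i : ℝ) * (eSum v (q + 1) - eSum v q) ≤ eSum v q := by
  induction i with
  | zero => simp
  | succ i ih =>
    have hstep : eSum v (q - (i + 1)) + (eSum v (q + 1) - eSum v q) ≤ eSum v (q - i) := by
      have := eSum_concave v (a := q - (i + 1)) (b := q + 1) (by omega) hq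
      have e1 : q + 1 - 1 = q := by omega
      have e2 : q - (i + 1) + 1 = q - i := by omega
      rw [e1, e2] at this
      linarith
    have := ih (by omega)
    push_cast
    linarith

lemma eSum_linear_bound {ι : Type} [Fintype ι] (v : ι → ℝ) {q : ℕ}
    (hq : q + 1 ≤ Fintype.card ι) {l : ℕ} (hl : l ≤ Fintype.card ι) :
    eSum v l ≤ eSum v q + ((l : ℝ) - q) * (eSum v (q + 1) - eSum v q) := by
  rcases le_total l q with h | h
  · have := eSum_linear_down v hq (q - l) (by omega)
    have e : q - (q - l) = l := by omega
    rw [e] at this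
    have hc : ((q - l : ℕ) : ℝ) = (q : ℝ) - l := by
      push_cast [Nat.cast_sub h]; ring
    rw [hc] at this
    nlinarith [this]
  · have := eSum_linear_up v (q := q) (l - q) (by omega)
    have e : q + (l - q) = l := by omega
    rw [e] at this
    have hc : ((l - q : ℕ) : ℝ) = (l : ℝ) - q := by
      push_cast [Nat.cast_sub h]; ring
    rw [hc] at this
    linarith


lemma indicator_sum (K t : ℕ) (h : t ≤ K) (x : ℝ) :
    ∑ c ∈ Finset.range K, (if c < t then x else 0) = t * x := by
  rw [← Finset.sum_filter]
  have : (Finset.range K).filter (fun c => c < t) = Finset.range t := by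
    ext c; simp only [Finset.mem_filter, Finset.mem_range]; omega
  rw [this, Finset.sum_const, Finset.card_range, nsmul_eq_mul]

lemma sum_mul_count_le {ι : Type} [Fintype ι] (v : ι → ℝ) (t : ι → ℕ) (K q : ℕ)
    (hq : q + 1 ≤ Fintype.card ι) (ht : ∀ i, t i ≤ K) :
    ∑ i, v i * (t i : ℝ) ≤
      K * eSum v q + ((∑ i, (t i : ℝ)) - K * q) * (eSum v (q + 1) - eSum v q) := by
  classical
  have h1 : ∀ i, v i * (t i : ℝ) = ∑ c ∈ Finset.range K, (if c < t i then v i else 0) := by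
    intro i; rw [indicator_sum K (t i) (ht i) (v i)]; ring
  have h2 : ∑ i, v i * (t i : ℝ)
      = ∑ c ∈ Finset.range K, ∑ i ∈ univ.filter (fun i => c < t i), v i := by
    simp_rw [h1]
    rw [Finset.sum_comm]
    congr 1; ext c
    rw [Finset.sum_filter]
  rw [h2]
  set d := eSum v (q + 1) - eSum v q with hd
  have h3 : ∀ c ∈ Finset.range K, ∑ i ∈ univ.filter (fun i => c < t i), v i ≤
      eSum v q + (((univ.filter (fun i => c < t i)).card : ℝ) - q) * d := by
    intro c _
    calc ∑ i ∈ univ.filter (fun i => c < t i), v i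
        ≤ eSum v ((univ.filter (fun i => c < t i)).card) := le_eSum v _
      _ ≤ _ := eSum_linear_bound v hq (Finset.card_le_univ _)
  calc ∑ c ∈ Finset.range K, ∑ i ∈ univ.filter (fun i => c < t i), v i
      ≤ ∑ c ∈ Finset.range K,
          (eSum v q + (((univ.filter (fun i => c < t i)).card : ℝ) - q) * d) :=
        Finset.sum_le_sum h3
    _ = K * eSum v q +
        ((∑ c ∈ Finset.range K, ((univ.filter (fun i => c < t i)).card : ℝ)) - K * q) * d := by
        rw [Finset.sum_add_distrib, Finset.sum_const, Finset.card_range, nsmul_eq_mul,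
          ← Finset.sum_mul, Finset.sum_sub_distrib, Finset.sum_const, Finset.card_range,
          nsmul_eq_mul]
    _ = _ := by
        have hsum : (∑ c ∈ Finset.range K, ((univ.filter (fun i => c < t i)).card : ℝ))
            = ∑ i, (t i : ℝ) := by
          have h4 : ∀ c, ((univ.filter (fun i => c < t i)).card : ℝ)
              = ∑ i, (if c < t i then (1:ℝ) else 0) := by
            intro c; rw [← Finset.sum_filter]; simp
          simp_rw [h4]
          rw [Finset.sum_comm]
          exact Finset.sum_congr rfl fun i _ => by
            rw [indicator_sum K (t i) (ht i) 1, mul_one]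
        rw [hsum]

lemma tens_sum_fst {n k : ℕ} (ψ : Fin n → ℝ) (S : Finset (Fin n × Fin k)) :
    ∑ p ∈ S, ψ p.1 = ∑ i, ψ i * ((S.filter (fun p => p.1 = i)).card : ℝ) := by
  classical
  have hfib := Finset.sum_fiberwise_of_maps_to (g := Prod.fst)
    (fun p (_ : p ∈ S) => Finset.mem_univ p.1) (fun p => ψ p.1)
  rw [← hfib]
  refine Finset.sum_congr rfl fun i _ => ?_
  have hcg : ∑ p ∈ S.filter (fun p => p.1 = i), ψ p.1
      = ∑ p ∈ S.filter (fun p => p.1 = i), ψ i :=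
    Finset.sum_congr rfl fun p hp => by rw [(Finset.mem_filter.mp hp).2]
  rw [hcg, Finset.sum_const, nsmul_eq_mul, mul_comm]

lemma fiber_card_le {n k : ℕ} (S : Finset (Fin n × Fin k)) (i : Fin n) :
    (S.filter (fun p => p.1 = i)).card ≤ k := by
  classical
  have : (S.filter (fun p => p.1 = i)).card ≤ (Finset.univ : Finset (Fin k)).card := by
    apply Finset.card_le_card_of_injOn (fun p => p.2) (fun p _ => Finset.mem_univ _)
    intro p hp p' hp' h
    have h1 : p.1 = i := (Finset.mem_filter.mp hp).2
    have h2 : p'.1 = i := (Finset.mem_filter.mp hp').2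
    exact Prod.ext (h1.trans h2.symm) h
  simpa using this

lemma fiber_card_sum {n k : ℕ} (S : Finset (Fin n × Fin k)) :
    S.card = ∑ i, (S.filter (fun p => p.1 = i)).card := by
  classical
  exact Finset.card_eq_sum_card_fiberwise (fun p _ => Finset.mem_univ p.1)

lemma tens_upper {n k : ℕ} (hk : 0 < k) (ψ : Fin n → ℝ) (χ : Fin k → ℝ) {m : ℕ}
    (hm : m < n * k) :
    eSum (tens ψ χ) m ≤ eSum ψ (m / k) +
      (((m % k : ℕ) : ℝ) / k) * (eSum ψ (m / k + 1) - eSum ψ (m / k)) +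
      (∑ i, |ψ i|) * (∑ j, |χ j - 1 / k|) := by
  classical
  set q := m / k with hqdef
  set r := m % k with hrdef
  have hq1 : q + 1 ≤ n := by
    have : m / k < n := Nat.div_lt_of_lt_mul (by rw [Nat.mul_comm]; exact hm)
    omega
  have hdm : k * q + r = m := Nat.div_add_mod m k
  have hmr : (m : ℝ) - k * q = r := by push_cast [← hdm]; ring
  apply eSum_le (tens ψ χ) (by simpa using le_of_lt hm)
  intro S hS
  have hsplit : ∑ p ∈ S, tens ψ χ p
      = (1 / k) * ∑ p ∈ S, ψ p.1 + ∑ p ∈ S, ψ p.1 * (χ p.2 - 1 / k) := by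
    rw [Finset.mul_sum, ← Finset.sum_add_distrib]
    exact Finset.sum_congr rfl fun p _ => by simp [tens]; ring
  have hterm2 : ∑ p ∈ S, ψ p.1 * (χ p.2 - 1 / k)
      ≤ (∑ i, |ψ i|) * (∑ j, |χ j - 1 / k|) := by
    calc ∑ p ∈ S, ψ p.1 * (χ p.2 - 1 / k)
        ≤ ∑ p ∈ S, |ψ p.1| * |χ p.2 - 1 / k| :=
          Finset.sum_le_sum fun p _ => by
            rw [← abs_mul]; exact le_abs_self _
      _ ≤ ∑ p : Fin n × Fin k, |ψ p.1| * |χ p.2 - 1 / k| :=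
          Finset.sum_le_sum_of_subset_of_nonneg (Finset.subset_univ S)
            (fun p _ _ => mul_nonneg (abs_nonneg _) (abs_nonneg _))
      _ = (∑ i, |ψ i|) * (∑ j, |χ j - 1 / k|) := by
          rw [Finset.sum_mul_sum, Fintype.sum_prod_type]
  have hterm1 : (1 / k : ℝ) * ∑ p ∈ S, ψ p.1
      ≤ eSum ψ q + ((r : ℝ) / k) * (eSum ψ (q + 1) - eSum ψ q) := by
    have hb := sum_mul_count_le ψ (fun i => (S.filter (fun p => p.1 = i)).card) k q
      (by simpa using hq1) (fiber_card_le S)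
    rw [tens_sum_fst ψ S]
    have hsum : (∑ i, (((S.filter (fun p => p.1 = i)).card : ℕ) : ℝ)) = m := by
      rw [← Nat.cast_sum]
      norm_cast
      rw [← fiber_card_sum S, hS]
    rw [hsum] at hb
    have hkpos : (0 : ℝ) < k := by positivity
    rw [hmr] at hb
    calc (1 / k : ℝ) * ∑ i, ψ i * ((S.filter (fun p => p.1 = i)).card : ℝ)
        ≤ (1 / k) * (k * eSum ψ q + (r : ℝ) * (eSum ψ (q + 1) - eSum ψ q)) := by
          apply mul_le_mul_of_nonneg_left hb (by positivity)
      _ = eSum ψ q + ((r : ℝ) / k) * (eSum ψ (q + 1) - eSum ψ q) := by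
          field_simp
  linarith [hsplit, hterm1, hterm2, le_of_eq hsplit]

lemma tens_lower {n k : ℕ} (hk : 0 < k) (φ : Fin n → ℝ) {m : ℕ} (hm : m < n * k) :
    eSum φ (m / k) + (((m % k : ℕ) : ℝ) / k) * (eSum φ (m / k + 1) - eSum φ (m / k)) ≤
      eSum (tens φ (fun _ : Fin k => 1 / (k : ℝ))) m := by
  classical
  set q := m / k with hqdef
  set r := m % k with hrdef
  have hq1 : q + 1 ≤ n := by
    have : m / k < n := Nat.div_lt_of_lt_mul (by rw [Nat.mul_comm]; exact hm)
    omega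
  have hdm : k * q + r = m := Nat.div_add_mod m k
  have hrk : r < k := Nat.mod_lt m hk
  have hcard : Fintype.card (Fin n) = n := Fintype.card_fin n
  obtain ⟨s, hs, hes⟩ := eSum_exists φ (m := q) (by omega)
  have hcompl : (sᶜ : Finset (Fin n)).Nonempty := by
    rw [← Finset.card_pos, Finset.card_compl, hs]
    simp only [hcard]; omega
  obtain ⟨a, ha, hamax⟩ := Finset.exists_max_image sᶜ φ hcompl
  have has : a ∉ s := Finset.mem_compl.mp ha
  -- claim: eSum φ (q+1) ≤ eSum φ q + φ a
  have hclaim : eSum φ (q + 1) ≤ eSum φ q + φ a := by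
    obtain ⟨t, ht, het⟩ := eSum_exists φ (m := q + 1) (by omega)
    have hne : (t \ s).Nonempty := by
      rw [← Finset.card_pos]
      have := Finset.card_le_card_sdiff_add_card (s := t) (t := s)
      omega
    obtain ⟨b, hb⟩ := hne
    have hbt : b ∈ t := (Finset.mem_sdiff.mp hb).1
    have hbs : b ∉ s := (Finset.mem_sdiff.mp hb).2
    have h1 : ∑ i ∈ t.erase b, φ i ≤ eSum φ q := by
      have := le_eSum φ (t.erase b)
      rwa [Finset.card_erase_of_mem hbt, ht, Nat.add_sub_cancel] at this
    have h2 : φ b ≤ φ a := hamax b (Finset.mem_compl.mpr hbs)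
    have h3 : ∑ i ∈ t.erase b, φ i + φ b = ∑ i ∈ t, φ i := Finset.sum_erase_add t φ hbt
    rw [het]
    linarith
  obtain ⟨w, _, hw⟩ := Finset.exists_subset_card_eq (s := (Finset.univ : Finset (Fin k))) (n := r)
    (by simpa using le_of_lt hrk)
  set S : Finset (Fin n × Fin k) := s ×ˢ Finset.univ ∪ {a} ×ˢ w with hSdef
  have hdisj : Disjoint (s ×ˢ (Finset.univ : Finset (Fin k))) ({a} ×ˢ w) := by
    rw [Finset.disjoint_left]
    rintro p hp hp'
    have h1 : p.1 ∈ s := (Finset.mem_product.mp hp).1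
    have h2 : p.1 ∈ ({a} : Finset (Fin n)) := (Finset.mem_product.mp hp').1
    rw [Finset.mem_singleton] at h2
    exact has (h2 ▸ h1)
  have hScard : S.card = m := by
    rw [hSdef, Finset.card_union_of_disjoint hdisj, Finset.card_product,
      Finset.card_product, hs, hw, Finset.card_univ, Fintype.card_fin,
      Finset.card_singleton, one_mul]
    rw [Nat.mul_comm]
    omega
  have hSsum : ∑ p ∈ S, tens φ (fun _ : Fin k => 1 / (k : ℝ)) p
      = (∑ i ∈ s, φ i) + (r : ℝ) * (φ a / k) := by
    rw [hSdef, Finset.sum_union hdisj]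
    have e1 : ∑ p ∈ s ×ˢ (Finset.univ : Finset (Fin k)),
        tens φ (fun _ : Fin k => 1 / (k : ℝ)) p = ∑ i ∈ s, φ i := by
      rw [Finset.sum_product]
      refine Finset.sum_congr rfl fun i _ => ?_
      simp only [tens]
      rw [Finset.sum_const, Finset.card_univ, Fintype.card_fin, nsmul_eq_mul]
      field_simp
    have e2 : ∑ p ∈ ({a} : Finset (Fin n)) ×ˢ w,
        tens φ (fun _ : Fin k => 1 / (k : ℝ)) p = (r : ℝ) * (φ a / k) := by
      rw [Finset.sum_product, Finset.sum_singleton]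
      simp only [tens]
      rw [Finset.sum_const, hw, nsmul_eq_mul]
      ring
    rw [e1, e2]
  have hle : (∑ i ∈ s, φ i) + (r : ℝ) * (φ a / k)
      ≤ eSum (tens φ (fun _ : Fin k => 1 / (k : ℝ))) m := by
    have := le_eSum (tens φ (fun _ : Fin k => 1 / (k : ℝ))) S
    rw [hScard, hSsum] at this
    exact this
  have hrknn : (0 : ℝ) ≤ (r : ℝ) / k := by positivity
  have hfinal : eSum φ q + ((r : ℝ) / k) * (eSum φ (q + 1) - eSum φ q)
      ≤ (∑ i ∈ s, φ i) + (r : ℝ) * (φ a / k) := by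
    rw [← hes]
    have : ((r : ℝ) / k) * (eSum φ (q + 1) - eSum φ q) ≤ ((r : ℝ) / k) * φ a :=
      mul_le_mul_of_nonneg_left (by linarith) hrknn
    have heq : (r : ℝ) * (φ a / k) = ((r : ℝ) / k) * φ a := by ring
    linarith [this, heq ▸ le_refl ((r : ℝ) * (φ a / k))]
  linarith


/-- states close enough to the maximally entangled (uniform)
state can be concentrated into it alongside any strict transformation. -/
theorem exists_delta_concentration {n k : ℕ} (hk : 2 ≤ k)
    (φ : Fin n → ℝ) (hφprob : IsProb φ) (hφpos : ∀ i, 0 < φ i)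
    (hφnc : ∃ a b : Fin n, φ a ≠ φ b)
    (ψ : Fin n → ℝ) (hsm : SMaj ψ φ) :
    ∃ δ > 0, ∀ χ : Fin k → ℝ, IsProb χ →
      Real.sqrt (∑ i, (sortDesc χ i - 1 / (k : ℝ)) ^ 2) < δ →
      Maj (tens ψ χ) (tens φ (fun _ : Fin k => 1 / (k : ℝ))) := by
  classical
  obtain ⟨a0, b0, hab⟩ := hφnc
  have hk0 : 0 < k := by omega
  have hkR : (0 : ℝ) < k := by positivity
  have hn2 : 2 ≤ n := by
    have hne : a0 ≠ b0 := fun h => hab (h ▸ rfl)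
    have h1 : 1 < Fintype.card (Fin n) := Fintype.one_lt_card_iff.mpr ⟨a0, b0, hne⟩
    rw [Fintype.card_fin] at h1
    omega
  -- the minimal majorization gap
  have hIcc : (Finset.Icc 1 (n - 1)).Nonempty := ⟨1, by rw [Finset.mem_Icc]; omega⟩
  set g : ℝ := (Finset.Icc 1 (n - 1)).inf' hIcc (fun j => eSum φ j - eSum ψ j) with hgdef
  have hg : 0 < g := by
    rw [hgdef, Finset.lt_inf'_iff]
    intro j hj
    rw [Finset.mem_Icc] at hj
    have := hsm.1 j hj.1 (by rw [Fintype.card_fin]; omega)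
    linarith
  have hgq : ∀ j, 1 ≤ j → j ≤ n - 1 → g ≤ eSum φ j - eSum ψ j := by
    intro j h1 h2
    exact Finset.inf'_le _ (by rw [Finset.mem_Icc]; omega)
  have hG0 : eSum φ 0 - eSum ψ 0 = 0 := by rw [eSum_zero, eSum_zero]; ring
  have hGn : eSum φ n - eSum ψ n = 0 := by
    have h1 := eSum_card φ
    have h2 := eSum_card ψ
    rw [Fintype.card_fin] at h1 h2
    rw [h1, h2, hsm.2]
    ring
  have hM0 : (0:ℝ) ≤ ∑ i, |ψ i| := Finset.sum_nonneg fun i _ => abs_nonneg _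
  refine ⟨g / (k ^ 2 * ((∑ i, |ψ i|) + 1)), by positivity, ?_⟩
  intro χ hχ hclose
  have hδ : (0:ℝ) < g / (k ^ 2 * ((∑ i, |ψ i|) + 1)) := by positivity
  -- bound on the ℓ¹ distance of χ from uniform
  have hpt : ∀ i, |sortDesc χ i - 1 / k| ≤ g / (k ^ 2 * ((∑ i, |ψ i|) + 1)) := by
    intro i
    have h1 : (sortDesc χ i - 1 / k) ^ 2 ≤ ∑ i', (sortDesc χ i' - 1 / k) ^ 2 :=
      Finset.single_le_sum (f := fun i' => (sortDesc χ i' - 1 / (k:ℝ)) ^ 2)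
        (fun _ _ => sq_nonneg _) (Finset.mem_univ i)
    calc |sortDesc χ i - 1 / k| = Real.sqrt ((sortDesc χ i - 1 / k) ^ 2) :=
          (Real.sqrt_sq_eq_abs _).symm
      _ ≤ Real.sqrt (∑ i', (sortDesc χ i' - 1 / k) ^ 2) := Real.sqrt_le_sqrt h1
      _ ≤ _ := le_of_lt hclose
  have hperm : ∑ j, |χ j - 1 / (k : ℝ)| = ∑ i, |sortDesc χ i - 1 / (k : ℝ)| := by
    have he : ∀ i, sortDesc χ i = χ ((Fin.revPerm.trans (Tuple.sort χ)) i) := by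
      intro i
      simp [sortDesc, Equiv.trans_apply, Fin.revPerm_apply]
    simp_rw [he]
    exact (Equiv.sum_comp (Fin.revPerm.trans (Tuple.sort χ))
      (fun j => |χ j - 1 / (k : ℝ)|)).symm
  have hT : (∑ j, |χ j - 1 / (k : ℝ)|) ≤ k * (g / (k ^ 2 * ((∑ i, |ψ i|) + 1))) := by
    rw [hperm]
    calc ∑ i, |sortDesc χ i - 1 / (k : ℝ)|
        ≤ ∑ _i : Fin k, g / (k ^ 2 * ((∑ i, |ψ i|) + 1)) :=
          Finset.sum_le_sum fun i _ => hpt i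
      _ = k * (g / (k ^ 2 * ((∑ i, |ψ i|) + 1))) := by
          rw [Finset.sum_const, Finset.card_univ, Fintype.card_fin, nsmul_eq_mul]
  have hMT : (∑ i, |ψ i|) * (∑ j, |χ j - 1 / (k : ℝ)|) ≤ g / k := by
    have h1 : (∑ i, |ψ i|) * (∑ j, |χ j - 1 / (k : ℝ)|)
        ≤ (∑ i, |ψ i|) * (k * (g / (k ^ 2 * ((∑ i, |ψ i|) + 1)))) :=
      mul_le_mul_of_nonneg_left hT hM0
    have h2 : (∑ i, |ψ i|) * (k * (g / (k ^ 2 * ((∑ i, |ψ i|) + 1))))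
        ≤ ((∑ i, |ψ i|) + 1) * (k * (g / (k ^ 2 * ((∑ i, |ψ i|) + 1)))) := by
      have hpos : (0:ℝ) ≤ k * (g / (k ^ 2 * ((∑ i, |ψ i|) + 1))) := by positivity
      nlinarith
    have h3 : ((∑ i, |ψ i|) + 1) * (k * (g / (k ^ 2 * ((∑ i, |ψ i|) + 1)))) = g / k := by
      field_simp
    linarith
  constructor
  · -- partial sums
    intro m hm1 hmlt
    rw [Fintype.card_prod, Fintype.card_fin, Fintype.card_fin] at hmlt
    have hub := tens_upper hk0 ψ χ hmlt
    have hlb := tens_lower hk0 φ hmlt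
    obtain ⟨q, r, hdm, hrk, hubq, hlbq⟩ :
        ∃ q r : ℕ, k * q + r = m ∧ r < k ∧
          (eSum (tens ψ χ) m ≤ eSum ψ q + ((r : ℝ) / k) * (eSum ψ (q + 1) - eSum ψ q)
            + (∑ i, |ψ i|) * (∑ j, |χ j - 1 / (k:ℝ)|)) ∧
          (eSum φ q + ((r : ℝ) / k) * (eSum φ (q + 1) - eSum φ q)
            ≤ eSum (tens φ (fun _ : Fin k => 1 / (k : ℝ))) m) :=
      ⟨m / k, m % k, Nat.div_add_mod m k, Nat.mod_lt m hk0, hub, hlb⟩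
    have hq1 : q + 1 ≤ n := by
      by_contra hcon
      push_neg at hcon
      have h1 : k * n ≤ k * q := Nat.mul_le_mul_left k (by omega)
      have h2 : n * k = k * n := Nat.mul_comm n k
      linarith
    -- key gap inequality
    have hrR : (r : ℝ) < k := by exact_mod_cast hrk
    have hrnn : (0 : ℝ) ≤ r := Nat.cast_nonneg r
    have hkr1 : (1 : ℝ) ≤ (k : ℝ) - r := by
      have : (r : ℕ) + 1 ≤ k := hrk
      have := (Nat.cast_le (α := ℝ)).mpr this
      push_cast at this
      linarith
    have hkey2 : g ≤ ((k : ℝ) - r) * (eSum φ q - eSum ψ q)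
        + (r : ℝ) * (eSum φ (q + 1) - eSum ψ (q + 1)) := by
      rcases Nat.eq_zero_or_pos q with hq0 | hq0
      · -- q = 0 : then r = m ≥ 1
        have hr1 : 1 ≤ r := by
          have h := hdm
          rw [hq0, Nat.mul_zero, Nat.zero_add] at h
          omega
        have hr1R : (1 : ℝ) ≤ r := by exact_mod_cast hr1
        have hΔ1 : g ≤ eSum φ (q + 1) - eSum ψ (q + 1) := by
          apply hgq <;> omega
        have hΔ0 : eSum φ q - eSum ψ q = 0 := by rw [hq0]; exact hG0
        have h5 : g ≤ (r : ℝ) * (eSum φ (q + 1) - eSum ψ (q + 1)) :=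
          le_trans hΔ1 (le_mul_of_one_le_left (by linarith) hr1R)
        rw [hΔ0]
        linarith
      · rcases eq_or_lt_of_le hq1 with he | hlt
        · -- q + 1 = n
          have hΔq : g ≤ eSum φ q - eSum ψ q := by apply hgq <;> omega
          have hΔn' : eSum φ (q + 1) - eSum ψ (q + 1) = 0 := by rw [he]; exact hGn
          have h5 : g ≤ ((k : ℝ) - r) * (eSum φ q - eSum ψ q) :=
            le_trans hΔq (le_mul_of_one_le_left (by linarith) hkr1)
          rw [hΔn']
          linarith
        · -- 1 ≤ q and q + 1 ≤ n - 1
          have hΔq : g ≤ eSum φ q - eSum ψ q := by apply hgq <;> omega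
          have hΔq1 : g ≤ eSum φ (q + 1) - eSum ψ (q + 1) := by apply hgq <;> omega
          have h5 : g ≤ ((k : ℝ) - r) * (eSum φ q - eSum ψ q) :=
            le_trans hΔq (le_mul_of_one_le_left (by linarith) hkr1)
          have h6 : (0:ℝ) ≤ (r : ℝ) * (eSum φ (q + 1) - eSum ψ (q + 1)) :=
            mul_nonneg hrnn (by linarith)
          linarith
    have hkey : eSum ψ q + ((r : ℝ) / k) * (eSum ψ (q + 1) - eSum ψ q) + g / k
        ≤ eSum φ q + ((r : ℝ) / k) * (eSum φ (q + 1) - eSum φ q) := by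
      rw [← sub_nonneg]
      have hid : eSum φ q + ((r : ℝ) / k) * (eSum φ (q + 1) - eSum φ q)
          - (eSum ψ q + ((r : ℝ) / k) * (eSum ψ (q + 1) - eSum ψ q) + g / k)
          = (((k : ℝ) - r) * (eSum φ q - eSum ψ q)
              + (r : ℝ) * (eSum φ (q + 1) - eSum ψ (q + 1)) - g) / k := by
        field_simp
        ring
      rw [hid]
      apply div_nonneg _ (le_of_lt hkR)
      linarith
    linarith
  · -- total sums
    have hsl : ∑ p : Fin n × Fin k, tens ψ χ p = ∑ i, ψ i := by
      rw [Fintype.sum_prod_type]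
      have h : ∀ i, ∑ j, tens ψ χ (i, j) = ψ i := by
        intro i
        simp only [tens]
        rw [← Finset.mul_sum, hχ.2, mul_one]
      simp_rw [h]
    have hsr : ∑ p : Fin n × Fin k, tens φ (fun _ : Fin k => 1 / (k : ℝ)) p = ∑ i, φ i := by
      rw [Fintype.sum_prod_type]
      have h : ∀ i, ∑ _j : Fin k, φ i * (1 / (k : ℝ)) = φ i := by
        intro i
        rw [Finset.sum_const, Finset.card_univ, Fintype.card_fin, nsmul_eq_mul]
        field_simp
      simp only [tens]
      simp_rw [h]
    rw [hsl, hsr, hsm.2]
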